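/- For every partition μ contained in the staircase δ_n, every border strip (connected skew shape with no 2×2 square) contained in the skew shape δ_n/μ whose removal from δ_n/μ leaves a valid skew shape has odd size. -/

import Mathlib

/-!
STATEMENT 3: For every partition μ ⊆ δ_n, every border strip (nonempty connected skew
shape with no 2×2 square) contained in δ_n/μ whose removal from δ_n/μ leaves a valid
skew shape (λ'/μ for some partition λ' with μ ⊆ λ' ⊆ δ_n) has odd size.

Rows and columns are 0-indexed: row `i` of δ_n has the cells `(i, j)` with `j < n - i`.
-/

/-- The cells of the skew shape δ_n/μ, where μ is given by its row lengths. -/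
def skewStaircase (n : ℕ) (μ : ℕ → ℕ) : Finset (ℕ × ℕ) :=
  (Finset.range n ×ˢ Finset.range n).filter
    (fun c => μ c.1 ≤ c.2 ∧ c.2 < n - c.1)

/-- Two cells are (edge-)adjacent. -/
def CellAdj (c d : ℕ × ℕ) : Prop :=
  (c.1 = d.1 ∧ (c.2 = d.2 + 1 ∨ d.2 = c.2 + 1)) ∨
  (c.2 = d.2 ∧ (c.1 = d.1 + 1 ∨ d.1 = c.1 + 1))

/-- A finite set of cells is connected: any two of its cells are joined by a path of
adjacent cells inside the set. -/
def CellConnected (B : Finset (ℕ × ℕ)) : Prop :=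
  ∀ c ∈ B, ∀ d ∈ B,
    Relation.ReflTransGen (fun a b => a ∈ B ∧ b ∈ B ∧ CellAdj a b) c d

/-- A set of cells contains no 2×2 square. -/
def NoTwoByTwo (B : Finset (ℕ × ℕ)) : Prop :=
  ¬ ∃ i j, (i, j) ∈ B ∧ (i + 1, j) ∈ B ∧ (i, j + 1) ∈ B ∧ (i + 1, j + 1) ∈ B

theorem borderStrip_in_staircase_odd
    (n : ℕ) (μ : ℕ → ℕ)
    (hμ_dec : ∀ i, μ (i + 1) ≤ μ i)              -- μ is a partition
    (hμ_sub : ∀ i, μ i ≤ n - i)                  -- μ ⊆ δ_n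
    (B : Finset (ℕ × ℕ))
    (hBsub : B ⊆ skewStaircase n μ)
    (hBne : B.Nonempty)
    (hconn : CellConnected B)
    (h22 : NoTwoByTwo B)
    -- removing B from δ_n/μ leaves a skew shape λ'/μ with μ ⊆ λ' ⊆ δ_n:
    (hremove : ∃ lam' : ℕ → ℕ,
      (∀ i, lam' (i + 1) ≤ lam' i) ∧ (∀ i, μ i ≤ lam' i) ∧ (∀ i, lam' i ≤ n - i) ∧
      ∀ c : ℕ × ℕ, (c ∈ skewStaircase n μ ∧ c ∉ B) ↔ (μ c.1 ≤ c.2 ∧ c.2 < lam' c.1)) :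
    Odd B.card := by
  obtain ⟨lam', hdec, hlo, hhi, hlam⟩ := hremove
  -- Characterization of membership in B
  have hmem : ∀ c : ℕ × ℕ, c ∈ B ↔ (c.1 < n ∧ lam' c.1 ≤ c.2 ∧ c.2 < n - c.1) := by
    intro c
    have hskew : c ∈ skewStaircase n μ ↔
        (c.1 < n ∧ c.2 < n ∧ μ c.1 ≤ c.2 ∧ c.2 < n - c.1) := by
      simp [skewStaircase, Finset.mem_filter, Finset.mem_product]
      tauto
    constructor
    · intro hc
      have hs := hskew.mp (hBsub hc)
      have hnot : ¬ (μ c.1 ≤ c.2 ∧ c.2 < lam' c.1) := fun h => ((hlam c).mpr h).2 hc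
      push_neg at hnot
      have := hlo c.1
      omega
    · intro h
      by_contra hc
      have hcle := hlo c.1
      have hsk : c ∈ skewStaircase n μ := hskew.mpr ⟨h.1, by omega, by omega, h.2.2⟩
      have := (hlam c).mp ⟨hsk, hc⟩
      omega
  -- path lemma: the set of rows visited by a path is an interval
  have hinterval : ∀ c d : ℕ × ℕ,
      Relation.ReflTransGen (fun a b => a ∈ B ∧ b ∈ B ∧ CellAdj a b) c d → c ∈ B →
      ∀ i, (c.1 ≤ i ∧ i ≤ d.1) ∨ (d.1 ≤ i ∧ i ≤ c.1) → ∃ j, (i, j) ∈ B := by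
    intro c d h hc
    induction h with
    | refl =>
      intro i hi
      refine ⟨c.2, ?_⟩
      have hic : i = c.1 := by omega
      rw [hic, Prod.mk.eta]
      exact hc
    | @tail b d h1 h2 ih =>
      intro i hi
      obtain ⟨hbB, hdB, hadj⟩ := h2
      have hrowadj : b.1 = d.1 ∨ b.1 + 1 = d.1 ∨ d.1 + 1 = b.1 := by
        rcases hadj with ⟨h, _⟩ | ⟨_, h | h⟩
        · exact Or.inl h
        · exact Or.inr (Or.inr (by omega))
        · exact Or.inr (Or.inl (by omega))
      by_cases hcase : (c.1 ≤ i ∧ i ≤ b.1) ∨ (b.1 ≤ i ∧ i ≤ c.1)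
      · exact ih i hcase
      · have hid : i = d.1 := by omega
        refine ⟨d.2, ?_⟩
        rw [hid, Prod.mk.eta]
        exact hdB
  -- disconnection lemma: if no vertical pair crosses rows i / i+1, paths stay ≤ i
  have hcross : ∀ i : ℕ, (∀ j, ¬ ((i, j) ∈ B ∧ (i + 1, j) ∈ B)) →
      ∀ c d : ℕ × ℕ,
      Relation.ReflTransGen (fun a b => a ∈ B ∧ b ∈ B ∧ CellAdj a b) c d →
      c.1 ≤ i → d.1 ≤ i := by
    intro i hnp c d h hc
    induction h with
    | refl => exact hc
    | @tail b d h1 h2 ih =>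
      obtain ⟨hbB, hdB, hadj⟩ := h2
      rcases hadj with ⟨h, _⟩ | ⟨hcol, h | h⟩
      · omega
      · omega
      · by_cases hb : b.1 < i
        · omega
        · have hbi : b.1 = i := by omega
          exfalso
          apply hnp b.2
          constructor
          · have hh : (i, b.2) = b := by rw [← hbi]
            rw [hh]; exact hbB
          · have hh : (i + 1, b.2) = d := by
              have h2 : d.2 = b.2 := hcol.symm
              rw [← hbi, ← h, ← h2]
            rw [hh]; exact hdB
  -- r and s: min and max rows of B
  obtain ⟨cs, hcsB, hs_le⟩ := B.exists_max_image Prod.fst hBne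
  obtain ⟨cr, hcrB, hr_le⟩ := B.exists_min_image Prod.fst hBne
  have hcsm := (hmem cs).mp hcsB
  have hsn : cs.1 < n := hcsm.1
  have hrs : cr.1 ≤ cs.1 := hr_le cs hcsB
  -- the bottom row has lam' cs.1 = n - cs.1 - 1
  have hlam_s : lam' cs.1 = n - cs.1 - 1 := by
    by_contra h
    have h2 : lam' (cs.1 + 1) ≤ lam' cs.1 := hdec cs.1
    have hb : (cs.1 + 1, lam' (cs.1 + 1)) ∈ B := by
      rw [hmem]; simp only [Prod.fst, Prod.snd]; omega
    have := hs_le _ hb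
    omega
  have hcsB' : (cs.1, n - cs.1 - 1) ∈ B := by
    rw [hmem]; simp only [Prod.fst, Prod.snd]; omega
  -- all rows between cr.1 and cs.1 are nonempty
  have hrow : ∀ i, cr.1 ≤ i → i ≤ cs.1 → ∃ j, (i, j) ∈ B := by
    intro i h1 h2
    refine hinterval cr (cs.1, n - cs.1 - 1) (hconn cr hcrB _ hcsB') hcrB i ?_
    left
    exact ⟨h1, h2⟩
  -- every row i with cr.1 ≤ i < cs.1 has lam' i = n - i - 2
  have hlam_i : ∀ i, cr.1 ≤ i → i < cs.1 → lam' i = n - i - 2 := by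
    intro i h1 h2
    obtain ⟨j, hj⟩ := hrow i h1 (le_of_lt h2)
    obtain ⟨j', hj'⟩ := hrow (i + 1) (by omega) h2
    have hj1 := (hmem _).mp hj
    have hj2 := (hmem _).mp hj'
    simp only [Prod.fst, Prod.snd] at hj1 hj2
    have hmono := hdec i
    have hge : n - i ≤ lam' i + 2 := by
      by_contra h
      push_neg at h
      apply h22
      refine ⟨i, n - i - 3, ?_, ?_, ?_, ?_⟩ <;>
        (rw [hmem]; simp only [Prod.fst, Prod.snd]; omega)
    by_contra hne
    have hli : lam' i = n - i - 1 := by omega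
    have hnp : ∀ j0, ¬ ((i, j0) ∈ B ∧ (i + 1, j0) ∈ B) := by
      rintro j0 ⟨ha, hb⟩
      rw [hmem] at ha hb
      simp only [Prod.fst, Prod.snd] at ha hb
      omega
    have := hcross i hnp (i, j) (cs.1, n - cs.1 - 1)
      (hconn _ hj _ hcsB') (le_refl _)
    omega
  -- compute the cardinality fiberwise by rows
  have hcard : B.card =
      ∑ i ∈ Finset.Icc cr.1 cs.1, (B.filter (fun c => c.1 = i)).card := by
    apply Finset.card_eq_sum_card_fiberwise
    intro c hc
    rw [Finset.mem_coe, Finset.mem_Icc]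
    exact ⟨hr_le c hc, hs_le c hc⟩
  have hfib : ∀ i ∈ Finset.Icc cr.1 cs.1,
      (B.filter (fun c => c.1 = i)).card = if i = cs.1 then 1 else 2 := by
    intro i hi
    rw [Finset.mem_Icc] at hi
    by_cases h : i = cs.1
    · rw [if_pos h]
      have heq : B.filter (fun c => c.1 = i) = {(i, n - i - 1)} := by
        ext ⟨c1, c2⟩
        simp only [Finset.mem_filter, hmem, Finset.mem_singleton, Prod.mk.injEq]
        constructor
        · rintro ⟨⟨hh1, hh2, hh3⟩, hh4⟩
          rw [h] at hh4 ⊢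
          subst hh4
          omega
        · rintro ⟨hh1, hh2⟩
          subst hh1; subst hh2
          rw [h]
          omega
      rw [heq, Finset.card_singleton]
    · rw [if_neg h]
      have hlt : i < cs.1 := by omega
      have hli := hlam_i i hi.1 hlt
      have heq : B.filter (fun c => c.1 = i) = {(i, n - i - 2), (i, n - i - 1)} := by
        ext ⟨c1, c2⟩
        simp only [Finset.mem_filter, hmem, Finset.mem_insert, Finset.mem_singleton,
          Prod.mk.injEq]
        constructor
        · rintro ⟨⟨hh1, hh2, hh3⟩, hh4⟩
          subst hh4
          omega
        · rintro (⟨hh1, hh2⟩ | ⟨hh1, hh2⟩) <;> (subst hh1; subst hh2) <;>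
            exact ⟨⟨by omega, by omega, by omega⟩, rfl⟩
      rw [heq]
      rw [Finset.card_insert_of_notMem (by simp; omega), Finset.card_singleton]
  rw [hcard, Finset.sum_congr rfl hfib]
  have hIcc : Finset.Icc cr.1 cs.1 = Finset.Ico cr.1 (cs.1 + 1) := by
    rw [Finset.Ico_add_one_right_eq_Icc]
  rw [hIcc, Finset.sum_Ico_succ_top (by omega), if_pos rfl]
  have hsum : ∑ i ∈ Finset.Ico cr.1 cs.1, (if i = cs.1 then 1 else 2)
      = 2 * (cs.1 - cr.1) := by
    rw [Finset.sum_congr rfl (fun i hi => if_neg (by rw [Finset.mem_Ico] at hi; omega))]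
    rw [Finset.sum_const, Nat.card_Ico, smul_eq_mul]
    ring
  rw [hsum]
  exact ⟨cs.1 - cr.1, by ring⟩
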